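/- Let K be a field of characteristic ≠ 2 and V a finite-dimensional K-vector space. Let a be an element of the odd part A_odd of the exterior algebra of V, and let D_a(x) = a*x - x*a be the corresponding inner derivation. Then the map exp(D_a) = id + D_a, sending x to x + a*x - x*a, is a K-algebra automorphism of ⋀ V: it is K-linear, bijective, and multiplicative, i.e. (id + D_a)(x*y) = ((id + D_a)(x)) * ((id + D_a)(y)) for all x, y. -/

import Mathlib

open ExteriorAlgebra

section Aux

variable {K : Type*} [Field K] {V : Type*} [AddCommGroup V] [Module K V]

private lemma aux_pow_comm {n : ℕ} {x : ExteriorAlgebra K V} (hx : x ∈ ⋀[K]^n V) (v : V) :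
    ι K v * x = ((-1 : K) ^ n) • (x * ι K v) := by
  induction hx using Submodule.pow_induction_on_left' with
  | algebraMap r => simp [Algebra.commutes]
  | add x y i hx hy ihx ihy => simp only [mul_add, add_mul, smul_add, ihx, ihy]
  | mem_mul m hm i x hx ih =>
    obtain ⟨w, rfl⟩ := hm
    have h1 : ι K v * ι K w = -(ι K w * ι K v) :=
      eq_neg_of_add_eq_zero_left (ι_add_mul_swap v w)
    calc ι K v * (ι K w * x) = (ι K v * ι K w) * x := by rw [mul_assoc]
      _ = -(ι K w * (ι K v * x)) := by rw [h1, neg_mul, mul_assoc]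
      _ = -(ι K w * (((-1 : K) ^ i) • (x * ι K v))) := by rw [ih]
      _ = ((-1 : K) ^ (i + 1)) • (ι K w * x * ι K v) := by
          rw [mul_smul_comm, ← neg_smul, pow_succ, mul_comm ((-1:K)^i) (-1:K), neg_one_mul,
            mul_assoc]

private lemma aux_odd_gen {u : ExteriorAlgebra K V}
    (hu : u ∈ (⨆ i : ℕ, ⋀[K]^(2 * i + 1) V)) (v : V) :
    ι K v * u = -(u * ι K v) := by
  refine Submodule.iSup_induction (motive := fun u => ι K v * u = -(u * ι K v)) _ hu
    (fun i x hx => ?_) (by simp) (fun x y hx hy => ?_)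
  · show ι K v * x = -(x * ι K v)
    rw [aux_pow_comm hx, Odd.neg_one_pow ⟨i, by ring⟩, neg_smul, one_smul]
  · show ι K v * (x + y) = -((x + y) * ι K v)
    rw [mul_add, add_mul, hx, hy, neg_add]

private lemma aux_odd_pow {u : ExteriorAlgebra K V}
    (hu : u ∈ (⨆ i : ℕ, ⋀[K]^(2 * i + 1) V)) {n : ℕ} {x : ExteriorAlgebra K V}
    (hx : x ∈ ⋀[K]^n V) : u * x = ((-1 : K) ^ n) • (x * u) := by
  induction hx using Submodule.pow_induction_on_left' with
  | algebraMap r => simp [Algebra.commutes]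
  | add x y i hx hy ihx ihy => simp only [mul_add, add_mul, smul_add, ihx, ihy]
  | mem_mul m hm i x hx ih =>
    obtain ⟨w, rfl⟩ := hm
    have h1 : u * ι K w = -(ι K w * u) := by
      rw [aux_odd_gen hu w]; simp
    calc u * (ι K w * x) = (u * ι K w) * x := by rw [mul_assoc]
      _ = -(ι K w * (u * x)) := by rw [h1, neg_mul, mul_assoc]
      _ = -(ι K w * (((-1 : K) ^ i) • (x * u))) := by rw [ih]
      _ = ((-1 : K) ^ (i + 1)) • (ι K w * x * u) := by
          rw [mul_smul_comm, ← neg_smul, pow_succ, mul_comm ((-1:K)^i) (-1:K), neg_one_mul,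
            mul_assoc]

private lemma aux_odd_odd {u w : ExteriorAlgebra K V}
    (hu : u ∈ (⨆ i : ℕ, ⋀[K]^(2 * i + 1) V))
    (hw : w ∈ (⨆ i : ℕ, ⋀[K]^(2 * i + 1) V)) : u * w = -(w * u) := by
  refine Submodule.iSup_induction (motive := fun w => u * w = -(w * u)) _ hw
    (fun i x hx => ?_) (by simp) (fun x y hx hy => ?_)
  · show u * x = -(x * u)
    rw [aux_odd_pow hu hx, Odd.neg_one_pow ⟨i, by ring⟩, neg_smul, one_smul]
  · show u * (x + y) = -((x + y) * u)
    rw [mul_add, add_mul, hx, hy, neg_add]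

private lemma aux_even_central {e : ExteriorAlgebra K V}
    (he : e ∈ (⨆ i : ℕ, ⋀[K]^(2 * i) V)) (z : ExteriorAlgebra K V) : e * z = z * e := by
  refine Submodule.iSup_induction (motive := fun e => ∀ z, e * z = z * e) _ he
    (fun i x hx => ?_) (by simp) (fun x y hx hy z => by rw [add_mul, mul_add, hx, hy]) z
  clear z; intro z
  induction z using ExteriorAlgebra.induction with
  | algebraMap r => rw [Algebra.commutes]
  | ι v => rw [aux_pow_comm hx, Even.neg_one_pow ⟨i, by ring⟩, one_smul]
  | mul p q hp hq => rw [← mul_assoc, hp, mul_assoc, hq, ← mul_assoc]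
  | add p q hp hq => rw [mul_add, add_mul, hp, hq]

private lemma aux_decomp (x : ExteriorAlgebra K V) :
    ∃ e b : ExteriorAlgebra K V, e ∈ (⨆ i : ℕ, ⋀[K]^(2 * i) V) ∧
      b ∈ (⨆ i : ℕ, ⋀[K]^(2 * i + 1) V) ∧ x = e + b := by
  induction x using DirectSum.Decomposition.inductionOn (fun i : ℕ => ⋀[K]^i V) with
  | zero => exact ⟨0, 0, zero_mem _, zero_mem _, by simp⟩
  | add p q hp hq =>
    obtain ⟨e1, b1, he1, hb1, rfl⟩ := hp
    obtain ⟨e2, b2, he2, hb2, rfl⟩ := hq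
    exact ⟨e1 + e2, b1 + b2, add_mem he1 he2, add_mem hb1 hb2, by abel⟩
  | homogeneous m =>
    rename_i i
    obtain ⟨k, hk⟩ | ⟨k, hk⟩ := Nat.even_or_odd i
    · refine ⟨m, 0, Submodule.mem_iSup_of_mem k ?_, zero_mem _, by simp⟩
      have : (2 : ℕ) * k = i := by omega
      rw [this]; exact m.2
    · refine ⟨0, m, zero_mem _, Submodule.mem_iSup_of_mem k ?_, by simp⟩
      have : (2 : ℕ) * k + 1 = i := by omega
      rw [this]; exact m.2

end Aux

set_option maxHeartbeats 1600000 in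
/-- For an odd element `a` of the exterior algebra, the truncated exponential
`exp(D_a) = id + D_a : x ↦ x + (a*x - x*a)` of the inner derivation `D_a` is a `K`-algebra
automorphism: it is `K`-linear, bijective and multiplicative. -/
theorem exp_inner_derivation_is_automorphism {K : Type*} [Field K] {V : Type*}
    [AddCommGroup V] [Module K V] [FiniteDimensional K V] (hchar : ringChar K ≠ 2)
    {a : ExteriorAlgebra K V} (ha : a ∈ (⨆ i : ℕ, ⋀[K]^(2 * i + 1) V)) :
    (∀ (c : K) (x y : ExteriorAlgebra K V),
        (fun z : ExteriorAlgebra K V => z + (a * z - z * a)) (c • x + y) =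
          c • (fun z : ExteriorAlgebra K V => z + (a * z - z * a)) x +
            (fun z : ExteriorAlgebra K V => z + (a * z - z * a)) y) ∧
      Function.Bijective (fun z : ExteriorAlgebra K V => z + (a * z - z * a)) ∧
      ∀ x y : ExteriorAlgebra K V,
        (fun z : ExteriorAlgebra K V => z + (a * z - z * a)) (x * y) =
          (fun z : ExteriorAlgebra K V => z + (a * z - z * a)) x *
            (fun z : ExteriorAlgebra K V => z + (a * z - z * a)) y := by
  have h2 : (2 : K) ≠ 0 := Ring.two_ne_zero hchar
  have haa : a * a = 0 := by
    have h := aux_odd_odd ha ha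
    have h' : (2 : K) • (a * a) = 0 := by
      rw [two_smul]; nth_rewrite 1 [h]; exact neg_add_cancel _
    rcases smul_eq_zero.mp h' with h'' | h''
    · exact absurd h'' h2
    · exact h''
  -- D x = 2 • (a * b) where b is the odd part of x
  have hD : ∀ x : ExteriorAlgebra K V, ∃ b, b ∈ (⨆ i : ℕ, ⋀[K]^(2 * i + 1) V) ∧
      a * x - x * a = (2 : K) • (a * b) := by
    intro x
    obtain ⟨e, b, he, hb, rfl⟩ := aux_decomp x
    refine ⟨b, hb, ?_⟩
    have h1 : e * a = a * e := aux_even_central he a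
    have h2' : b * a = -(a * b) := aux_odd_odd hb ha
    rw [mul_add, add_mul, h1, h2', two_smul]
    abel
  have hab0 : ∀ b, b ∈ (⨆ i : ℕ, ⋀[K]^(2 * i + 1) V) →
      a * (a * b) = 0 ∧ (a * b) * a = 0 := by
    intro b hb
    have hba : b * a = -(a * b) := aux_odd_odd hb ha
    constructor
    · rw [← mul_assoc, haa, zero_mul]
    · rw [mul_assoc, hba, mul_neg, ← mul_assoc, haa, zero_mul, neg_zero]
  have hDD : ∀ x y : ExteriorAlgebra K V,
      (a * x - x * a) * (a * y - y * a) = 0 := by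
    intro x y
    obtain ⟨b, hb, hxb⟩ := hD x
    obtain ⟨c, hc, hyc⟩ := hD y
    rw [hxb, hyc, smul_mul_smul_comm]
    have hba : b * a = -(a * b) := aux_odd_odd hb ha
    have : (a * b) * (a * c) = 0 := by
      rw [mul_assoc a b (a*c), ← mul_assoc b a c, hba, neg_mul, mul_neg, ← mul_assoc,
        ← mul_assoc, haa, zero_mul, zero_mul, neg_zero]
    rw [this, smul_zero]
  have hD2 : ∀ x : ExteriorAlgebra K V,
      a * (a * x - x * a) - (a * x - x * a) * a = 0 := by
    intro x
    obtain ⟨b, hb, hxb⟩ := hD x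
    obtain ⟨h1, h2'⟩ := hab0 b hb
    rw [hxb, mul_smul_comm, smul_mul_assoc, h1, h2']
    simp
  refine ⟨?_, ?_, ?_⟩
  · intro c x y
    show c • x + y + (a * (c • x + y) - (c • x + y) * a) =
      c • (x + (a * x - x * a)) + (y + (a * y - y * a))
    simp only [mul_add, add_mul, mul_smul_comm, smul_mul_assoc, smul_add, smul_sub]
    abel
  · refine Function.bijective_iff_has_inverse.mpr
      ⟨fun z => z - (a * z - z * a), fun z => ?_, fun z => ?_⟩
    · have this : a * (a * z - z * a) - (a * z - z * a) * a = 0 := hD2 z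
      show z + (a * z - z * a) - (a * (z + (a * z - z * a)) - (z + (a * z - z * a)) * a) = z
      calc z + (a * z - z * a) -
            (a * (z + (a * z - z * a)) - (z + (a * z - z * a)) * a)
          = z - (a * (a * z - z * a) - (a * z - z * a) * a) := by
            simp only [mul_add, add_mul]; abel
        _ = z := by rw [this, sub_zero]
    · have this : a * (a * z - z * a) - (a * z - z * a) * a = 0 := hD2 z
      show z - (a * z - z * a) + (a * (z - (a * z - z * a)) - (z - (a * z - z * a)) * a) = z
      calc z - (a * z - z * a) +
            (a * (z - (a * z - z * a)) - (z - (a * z - z * a)) * a)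
          = z - (a * (a * z - z * a) - (a * z - z * a) * a) := by
            simp only [mul_sub, sub_mul]; abel
        _ = z := by rw [this, sub_zero]
  · intro x y
    have expand : (x + (a * x - x * a)) * (y + (a * y - y * a)) =
        (x * y + (a * (x * y) - (x * y) * a)) +
          (a * x - x * a) * (a * y - y * a) := by noncomm_ring
    show x * y + (a * (x * y) - (x * y) * a) =
      (x + (a * x - x * a)) * (y + (a * y - y * a))
    rw [expand, hDD, add_zero]
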